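/- Let f in K[X_1,...,X_n] be a nonzero polynomial of degree d, let u, v in K^n, and suppose there are at least N distinct scalars \lambda in K such that u + \lambda v is a zero of f of multiplicity at least r, where d \leq rN - 1. Then the univariate polynomial \lambda \mapsto f(u + \lambda v) is identically zero. -/

import Mathlib

open MvPolynomial

/-- The multivariate Hasse derivative `∂^j`. -/
noncomputable def mvHasseDeriv {K : Type*} [CommSemiring K] {n : ℕ} (j : Fin n →₀ ℕ)
    (f : MvPolynomial (Fin n) K) : MvPolynomial (Fin n) K :=
  (AddMonoidAlgebra.coeff f).sum fun c a => monomial (c - j) (((∏ i ∈ j.support, (c i).choose (j i) : ℕ) : K) * a)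


lemma binom_expand {K : Type*} [CommRing K] (wi vi : K) (m : ℕ) :
    (Polynomial.C wi + Polynomial.X * Polynomial.C vi) ^ m
      = ∑ s ∈ Finset.range (m + 1),
          Polynomial.C ((m.choose s : K) * wi ^ (m - s) * vi ^ s) * Polynomial.X ^ s := by
  rw [add_comm, add_pow]
  refine Finset.sum_congr rfl fun s _ => ?_
  rw [mul_pow, ← Polynomial.C_eq_natCast, ← Polynomial.C_pow, ← Polynomial.C_pow,
    Polynomial.C_mul, Polynomial.C_mul]
  ring

lemma key_monomial {K : Type*} [Field K] {n : ℕ} (w v : Fin n → K) (c : Fin n →₀ ℕ)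
    (a : K) (k : ℕ) :
    Polynomial.coeff
      (aeval (fun i => Polynomial.C (w i) + Polynomial.X * Polynomial.C (v i))
        (monomial c a)) k
    = ∑ j ∈ Finset.finsuppAntidiag Finset.univ k,
        (∏ i, v i ^ j i) *
          eval w (monomial (c - j)
            (((∏ i ∈ j.support, (c i).choose (j i) : ℕ) : K) * a)) := by
  -- normalize RHS
  have hRHS : ∀ j ∈ Finset.finsuppAntidiag (Finset.univ : Finset (Fin n)) k,
      (∏ i, v i ^ j i) *
          eval w (monomial (c - j)
            (((∏ i ∈ j.support, (c i).choose (j i) : ℕ) : K) * a))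
        = a * ∏ i, (((c i).choose (j i) : K) * w i ^ (c i - j i) * v i ^ j i) := by
    intro j _
    rw [eval_monomial, Finsupp.prod_fintype _ _ (fun i => pow_zero _)]
    have hch : ((∏ i ∈ j.support, (c i).choose (j i) : ℕ) : K)
        = ∏ i, ((c i).choose (j i) : K) := by
      rw [Nat.cast_prod]
      exact Finset.prod_subset (Finset.subset_univ _)
        (fun i _ hi => by simp [Finsupp.notMem_support_iff.mp hi])
    have hsub : ∀ i : Fin n, (c - j) i = c i - j i := fun i => Finsupp.tsub_apply c j i
    simp only [hsub, hch]
    rw [Finset.prod_mul_distrib, Finset.prod_mul_distrib]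
    ring
  rw [Finset.sum_congr rfl hRHS]
  -- expand LHS
  rw [aeval_monomial, Finsupp.prod_fintype _ _ (fun i => pow_zero _)]
  simp only [binom_expand]
  rw [Finset.prod_univ_sum]
  simp only [Finset.prod_mul_distrib, ← map_prod, Finset.prod_pow_eq_pow_sum]
  rw [Finset.mul_sum, Polynomial.finset_sum_coeff]
  simp only [Polynomial.algebraMap_eq, ← mul_assoc, ← Polynomial.C_mul,
    Polynomial.coeff_C_mul, Polynomial.coeff_X_pow, mul_ite, mul_one, mul_zero]
  rw [← Finset.sum_filter]
  have hzero : ∀ j ∈ Finset.finsuppAntidiag (Finset.univ : Finset (Fin n)) k,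
      ((a * ∏ i, ((c i).choose (j i) : K)) * ∏ i, w i ^ (c i - j i)) * ∏ i, v i ^ j i ≠ 0 →
      ∀ i, j i ≤ c i := by
    intro j _ hne
    by_contra hc
    push_neg at hc
    obtain ⟨i, hi⟩ := hc
    apply hne
    have : ((c i).choose (j i) : K) = 0 := by
      rw [Nat.choose_eq_zero_of_lt hi]; simp
    rw [Finset.prod_eq_zero (Finset.mem_univ i) this]
    ring
  rw [← Finset.sum_filter_of_ne hzero]
  refine Finset.sum_nbij' (fun g => Finsupp.equivFunOnFinite.symm g) (fun j => ⇑j)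
    ?_ ?_ ?_ ?_ ?_
  · intro g hg
    simp only [Finset.mem_filter, Fintype.mem_piFinset, Finset.mem_range,
      Finset.mem_finsuppAntidiag, Nat.lt_succ_iff] at hg ⊢
    refine ⟨⟨?_, Finset.subset_univ _⟩, ?_⟩
    · simpa [Finsupp.equivFunOnFinite_symm_coe] using hg.2.symm
    · intro i
      simpa using hg.1 i
  · intro j hj
    simp only [Finset.mem_filter, Fintype.mem_piFinset, Finset.mem_range,
      Finset.mem_finsuppAntidiag, Nat.lt_succ_iff] at hj ⊢
    exact ⟨fun i => hj.2 i, hj.1.1.symm⟩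
  · intro g _
    exact Finsupp.equivFunOnFinite.apply_symm_apply g
  · intro j _
    exact Finsupp.equivFunOnFinite_symm_coe j
  · intro g _
    simp

lemma key_coeff {K : Type*} [Field K] {n : ℕ} (f : MvPolynomial (Fin n) K)
    (w v : Fin n → K) (k : ℕ) :
    Polynomial.coeff
      (aeval (fun i => Polynomial.C (w i) + Polynomial.X * Polynomial.C (v i)) f) k
    = ∑ j ∈ Finset.finsuppAntidiag Finset.univ k,
        (∏ i, v i ^ j i) * eval w (mvHasseDeriv j f) := by
  have hhd : ∀ j : Fin n →₀ ℕ, mvHasseDeriv j f = ∑ c ∈ f.support,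
      monomial (c - j) (((∏ i ∈ j.support, (c i).choose (j i) : ℕ) : K) * coeff c f) :=
    fun j => rfl
  conv_lhs => rw [f.as_sum]
  rw [map_sum, Polynomial.finset_sum_coeff]
  simp only [hhd, map_sum, Finset.mul_sum]
  rw [Finset.sum_comm]
  exact Finset.sum_congr rfl fun c _ => key_monomial w v c (coeff c f) k

/-- If `f ≠ 0` has degree `d ≤ rN - 1` and there are at least `N` scalars `λ` such that
`u + λ v` is a zero of `f` of multiplicity at least `r`, then the univariate polynomial
`λ ↦ f(u + λ v)` is identically zero. -/
theorem restriction_to_line_eq_zero {K : Type*} [Field K] {n r N d : ℕ}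
    (f : MvPolynomial (Fin n) K) (hf : f ≠ 0) (hdeg : f.totalDegree = d)
    (hdN : d < r * N) (u v : Fin n → K) (Λ : Finset K) (hΛ : N ≤ Λ.card)
    (hmult : ∀ t ∈ Λ, ∀ j : Fin n →₀ ℕ, (∑ i, j i) < r →
      eval (fun i => u i + t * v i) (mvHasseDeriv j f) = 0) :
    aeval (fun i => Polynomial.C (u i) + Polynomial.X * Polynomial.C (v i)) f =
      (0 : Polynomial K) := by
  set g : Polynomial K :=
    aeval (fun i => Polynomial.C (u i) + Polynomial.X * Polynomial.C (v i)) f with hg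
  classical
  by_contra hg0
  -- the shifted polynomial at t
  have hdvd : ∀ t ∈ Λ, (Polynomial.X - Polynomial.C t) ^ r ∣ g := by
    intro t ht
    set h : Polynomial K :=
      aeval (fun i => Polynomial.C (u i + t * v i) + Polynomial.X * Polynomial.C (v i)) f
      with hh
    have hXd : Polynomial.X ^ r ∣ h := by
      rw [Polynomial.X_pow_dvd_iff]
      intro k hk
      rw [hh, key_coeff]
      refine Finset.sum_eq_zero fun j hj => ?_
      rw [Finset.mem_finsuppAntidiag] at hj
      have : (∑ i, j i) < r := by rw [hj.1]; exact hk  -- ∑ over univ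
      rw [hmult t ht j this, mul_zero]
    obtain ⟨q, hq⟩ := hXd
    refine ⟨q.comp (Polynomial.X - Polynomial.C t), ?_⟩
    have hcomp : h.comp (Polynomial.X - Polynomial.C t) = g := by
      rw [hh, hg, Polynomial.comp_eq_aeval]
      rw [MvPolynomial.comp_aeval_apply]
      refine congrFun (congrArg _ (congrArg _ (funext fun i => ?_))) f
      simp only [map_add, map_mul, Polynomial.aeval_X, Polynomial.aeval_C,
        Polynomial.algebraMap_eq, Polynomial.C_add, Polynomial.C_mul]
      ring
    rw [← hcomp, hq, Polynomial.mul_comp, Polynomial.X_pow_comp]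
  -- degree bound
  have hdegg : g.natDegree ≤ d := by
    have hgsum : g = ∑ c ∈ f.support,
        aeval (fun i => Polynomial.C (u i) + Polynomial.X * Polynomial.C (v i))
          (monomial c (coeff c f)) := by
      rw [hg]
      conv_lhs => rw [f.as_sum]
      rw [map_sum]
    rw [← hdeg, hgsum]
    refine Polynomial.natDegree_sum_le_of_forall_le _ _ fun c hc => ?_
    rw [aeval_monomial, Polynomial.algebraMap_eq]
    refine (Polynomial.natDegree_C_mul_le _ _).trans ?_
    refine le_trans ?_ (MvPolynomial.le_totalDegree hc)
    have hsum : (c.sum fun _ e => e) = ∑ i ∈ c.support, c i := rfl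
    rw [hsum]
    refine (Polynomial.natDegree_prod_le c.support
      (fun i => (Polynomial.C (u i) + Polynomial.X * Polynomial.C (v i)) ^ c i)).trans ?_
    refine Finset.sum_le_sum fun i _ => ?_
    refine (Polynomial.natDegree_pow_le).trans ?_
    have h1 : (Polynomial.C (u i) + Polynomial.X * Polynomial.C (v i)).natDegree ≤ 1 := by
      refine (Polynomial.natDegree_add_le _ _).trans (max_le ?_ ?_)
      · simp
      · exact (Polynomial.natDegree_mul_le).trans (by simp)
    calc c i * (Polynomial.C (u i) + Polynomial.X * Polynomial.C (v i)).natDegree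
        ≤ c i * 1 := Nat.mul_le_mul_left _ h1
      _ = c i := mul_one _
  -- counting roots
  have hr : 0 < r := by
    rcases Nat.eq_zero_or_pos r with h | h
    · subst h; simp at hdN
    · exact h
  have hroot : ∀ t ∈ Λ, r ≤ g.rootMultiplicity t := fun t ht =>
    (Polynomial.le_rootMultiplicity_iff hg0).2 (hdvd t ht)
  have hsub : Λ ⊆ g.roots.toFinset := by
    intro t ht
    rw [Multiset.mem_toFinset, ← Multiset.count_pos, Polynomial.count_roots]
    exact lt_of_lt_of_le hr (hroot t ht)
  have hcontra : r * N ≤ d := by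
    calc r * N ≤ r * Λ.card := Nat.mul_le_mul_left r hΛ
      _ = ∑ _t ∈ Λ, r := by rw [Finset.sum_const, smul_eq_mul, mul_comm]
      _ ≤ ∑ t ∈ Λ, g.roots.count t := Finset.sum_le_sum fun t ht => by
          rw [Polynomial.count_roots]; exact hroot t ht
      _ ≤ ∑ t ∈ g.roots.toFinset, g.roots.count t := Finset.sum_le_sum_of_subset hsub
      _ = Multiset.card g.roots := g.roots.toFinset_sum_count_eq
      _ ≤ g.natDegree := g.card_roots'
      _ ≤ d := hdegg
  exact absurd hdN (not_lt.2 hcontra)
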